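/- arXiv:2506.21733 — 2 statements merged into one kernel-verified Lean document; each statement's English description precedes it below -/
import Mathlib

section
/- Let ℓ: ℝ^p → ℝ be twice continuously differentiable with maximizer θ̂, and suppose the Hessian satisfies −∇²ℓ(θ) ⪰ η·n·I_p (all eigenvalues of −∇²ℓ at least η·n) on the Euclidean ball B(θ̂, δ), where η > 0, n ≥ 1. Then for any 0 < γ ≤ δ, ∫_{B(θ̂,δ) \ B(θ̂,γ)} exp(ℓ(θ) − ℓ(θ̂)) dθ ≤ (2π/(η n))^{p/2} · P(χ²_p ≥ η n γ²), where χ²_p is a chi-squared random variable with p degrees of freedom. -/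
open MeasureTheory Real Set


lemma taylor_pt {p : ℕ} (ℓ : EuclideanSpace ℝ (Fin p) → ℝ)
    (θh θ : EuclideanSpace ℝ (Fin p)) (c δ : ℝ)
    (hsm : ContDiff ℝ 2 ℓ) (hgrad : fderiv ℝ ℓ θh = 0)
    (hhess : ∀ x ∈ Metric.closedBall θh δ, ∀ v : EuclideanSpace ℝ (Fin p),
      iteratedFDeriv ℝ 2 ℓ x ![v, v] ≤ -c * ‖v‖^2)
    (hθ : θ ∈ Metric.closedBall θh δ) :
    ℓ θ - ℓ θh ≤ -(c/2) * ‖θ - θh‖^2 := by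
  set v := θ - θh with hv
  have hδ0 : 0 ≤ δ := le_trans dist_nonneg (Metric.mem_closedBall.mp hθ)
  have hvδ : ‖v‖ ≤ δ := by
    simpa [hv, dist_eq_norm] using Metric.mem_closedBall.mp hθ
  set L : ℝ → EuclideanSpace ℝ (Fin p) := fun t => θh + t • v with hL
  have hLmem : ∀ t ∈ Set.Icc (0:ℝ) 1, L t ∈ Metric.closedBall θh δ := by
    intro t ht
    have : dist (L t) θh = |t| * ‖v‖ := by
      simp [hL, dist_eq_norm, norm_smul, abs_of_nonneg ht.1]
    rw [Metric.mem_closedBall, this, abs_of_nonneg ht.1]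
    calc t * ‖v‖ ≤ 1 * ‖v‖ := by nlinarith [norm_nonneg v, ht.2]
      _ ≤ δ := by simpa using hvδ
  have hdiff : Differentiable ℝ ℓ := hsm.differentiable (by norm_num)
  have hL' : ∀ t : ℝ, HasDerivAt L v t := fun t => by
    simpa [hL] using ((hasDerivAt_id t).smul_const v).const_add θh
  -- first derivative of g
  have hg' : ∀ t : ℝ, HasDerivAt (fun t => ℓ (L t)) (fderiv ℝ ℓ (L t) v) t := fun t =>
    (hdiff (L t)).hasFDerivAt.comp_hasDerivAt t (hL' t)
  -- second derivative
  have hdiff2 : Differentiable ℝ (fderiv ℝ ℓ) :=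
    (hsm.fderiv_right (m := 1) (by norm_num)).differentiable (by norm_num)
  have hg'' : ∀ t : ℝ, HasDerivAt (fun t => fderiv ℝ ℓ (L t) v)
      (fderiv ℝ (fderiv ℝ ℓ) (L t) v v) t := by
    intro t
    have h1 : HasDerivAt (fun t => fderiv ℝ ℓ (L t)) (fderiv ℝ (fderiv ℝ ℓ) (L t) v) t :=
      (hdiff2 (L t)).hasFDerivAt.comp_hasDerivAt t (hL' t)
    simpa using h1.clm_apply (hasDerivAt_const t v)
  have hhq : ∀ t ∈ Set.Icc (0:ℝ) 1, fderiv ℝ (fderiv ℝ ℓ) (L t) v v ≤ -c * ‖v‖^2 := by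
    intro t ht
    have := hhess (L t) (hLmem t ht) v
    rwa [iteratedFDeriv_two_apply] at this
    done
  -- h := g + c/2 ‖v‖² t², h' its derivative
  set h : ℝ → ℝ := fun t => ℓ (L t) + c/2 * ‖v‖^2 * t^2 with hh
  set h' : ℝ → ℝ := fun t => fderiv ℝ ℓ (L t) v + c * ‖v‖^2 * t with hh'
  have hd : ∀ t : ℝ, HasDerivAt h (h' t) t := by
    intro t
    have : HasDerivAt (fun t : ℝ => c/2 * ‖v‖^2 * t^2) (c * ‖v‖^2 * t) t := by
      have := ((hasDerivAt_pow 2 t).const_mul (c/2 * ‖v‖^2))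
      exact this.congr_deriv (by ring)
    exact (hg' t).add this
  have hd' : ∀ t : ℝ, HasDerivAt h' (fderiv ℝ (fderiv ℝ ℓ) (L t) v v + c * ‖v‖^2) t := by
    intro t
    have : HasDerivAt (fun t : ℝ => c * ‖v‖^2 * t) (c * ‖v‖^2) t := by
      simpa using (hasDerivAt_id t).const_mul (c * ‖v‖^2)
    exact (hg'' t).add this
  have hanti' : AntitoneOn h' (Set.Icc 0 1) := by
    apply antitoneOn_of_deriv_nonpos (convex_Icc 0 1)
    · exact fun t _ => (hd' t).continuousAt.continuousWithinAt
    · exact fun t _ => ((hd' t).differentiableAt).differentiableWithinAt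
    · intro t ht
      rw [interior_Icc] at ht
      rw [(hd' t).deriv]
      have := hhq t ⟨le_of_lt ht.1, le_of_lt ht.2⟩
      nlinarith [this]
  have h'0 : h' 0 = 0 := by simp [hh', hL, hgrad]
  have h'np : ∀ t ∈ Set.Icc (0:ℝ) 1, h' t ≤ 0 := by
    intro t ht
    calc h' t ≤ h' 0 := hanti' (Set.left_mem_Icc.mpr zero_le_one) ht ht.1
      _ = 0 := h'0
  have hanti : AntitoneOn h (Set.Icc 0 1) := by
    apply antitoneOn_of_deriv_nonpos (convex_Icc 0 1)
    · exact fun t _ => (hd t).continuousAt.continuousWithinAt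
    · exact fun t _ => ((hd t).differentiableAt).differentiableWithinAt
    · intro t ht
      rw [interior_Icc] at ht
      rw [(hd t).deriv]
      exact h'np t ⟨le_of_lt ht.1, le_of_lt ht.2⟩
  have := hanti (Set.left_mem_Icc.mpr zero_le_one) (Set.right_mem_Icc.mpr zero_le_one)
    zero_le_one
  have hL1 : L 1 = θ := by simp [hL, hv]
  have hL0 : L 0 = θh := by simp [hL]
  rw [hh] at this
  simp only [hL1, hL0, one_pow, mul_one] at this
  simp only [ne_eq, OfNat.ofNat_ne_zero, not_false_eq_true, zero_pow, mul_zero, add_zero] at this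
  linarith


lemma gauss_integrable {p : ℕ} (c : ℝ) (hc : 0 < c) :
    Integrable (fun x : EuclideanSpace ℝ (Fin p) => Real.exp (-(c/2) * ‖x‖^2)) := by
  have h := (GaussianFourier.integrable_cexp_neg_mul_sq_norm_add
    (b := ((c/2 : ℝ) : ℂ)) (by simpa using by positivity) 0
    (0 : EuclideanSpace ℝ (Fin p))).norm
  refine h.congr (Filter.Eventually.of_forall fun x => ?_)
  simp only [zero_mul, add_zero, ← Complex.ofReal_pow,
    ← Complex.ofReal_neg, ← Complex.ofReal_mul, Complex.norm_exp, Complex.ofReal_re]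


lemma polar_tail {p : ℕ} (hp : 1 ≤ p) (c γ : ℝ) (hc : 0 < c) (hγ : 0 < γ) :
    ∫ x in (Metric.closedBall (0 : EuclideanSpace ℝ (Fin p)) γ)ᶜ,
        Real.exp (-(c/2) * ‖x‖^2)
      = (p : ℝ) * (volume (Metric.ball (0 : EuclideanSpace ℝ (Fin p)) 1)).toReal *
          ∫ y in Ioi γ, y^(p-1) * Real.exp (-(c/2) * y^2) := by
  haveI : Nonempty (Fin p) := Fin.pos_iff_nonempty.mp hp
  have hdim : Module.finrank ℝ (EuclideanSpace ℝ (Fin p)) = p := finrank_euclideanSpace_fin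
  set f : ℝ → ℝ := (Ioi γ).indicator (fun r => Real.exp (-(c/2) * r^2)) with hf
  have key : ∀ x : EuclideanSpace ℝ (Fin p),
      ((Metric.closedBall (0 : EuclideanSpace ℝ (Fin p)) γ)ᶜ).indicator
        (fun x => Real.exp (-(c/2) * ‖x‖^2)) x = f ‖x‖ := by
    intro x
    by_cases h : γ < ‖x‖ <;>
      simp [hf, Set.indicator, h, mem_closedBall_zero_iff, not_le.mpr, not_lt.mp]
  rw [← integral_indicator measurableSet_closedBall.compl]
  calc ∫ x, ((Metric.closedBall (0 : EuclideanSpace ℝ (Fin p)) γ)ᶜ).indicator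
        (fun x => Real.exp (-(c/2) * ‖x‖^2)) x
      = ∫ x : EuclideanSpace ℝ (Fin p), f ‖x‖ := by
        exact integral_congr_ae (Filter.Eventually.of_forall key)
    _ = (Module.finrank ℝ (EuclideanSpace ℝ (Fin p))) •
          (volume (Metric.ball (0 : EuclideanSpace ℝ (Fin p)) 1)).toReal •
          ∫ y in Ioi (0:ℝ), y ^ (Module.finrank ℝ (EuclideanSpace ℝ (Fin p)) - 1) • f y :=
        integral_fun_norm_addHaar volume f
    _ = (p : ℝ) * (volume (Metric.ball (0 : EuclideanSpace ℝ (Fin p)) 1)).toReal *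
          ∫ y in Ioi γ, y^(p-1) * Real.exp (-(c/2) * y^2) := by
        rw [hdim, nsmul_eq_mul, smul_eq_mul, mul_assoc]
        congr 2
        have : ∀ y : ℝ, y ^ (p-1) • f y
            = (Ioi γ).indicator (fun y => y^(p-1) * Real.exp (-(c/2) * y^2)) y := by
          intro y
          by_cases h : y ∈ Ioi γ <;>
            simp [hf, Set.indicator_of_mem, Set.indicator_of_notMem, h]
        simp_rw [this]
        rw [setIntegral_indicator measurableSet_Ioi,
          Set.inter_eq_self_of_subset_right (Ioi_subset_Ioi hγ.le)]

lemma chisq_tail {p : ℕ} (hp : 1 ≤ p) (c γ : ℝ) (hc : 0 < c) (hγ : 0 < γ) :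
    ∫ x in Set.Ici (c * γ^2),
        x ^ ((p : ℝ)/2 - 1) * Real.exp (-x/2) / (2 ^ ((p : ℝ)/2) * Real.Gamma ((p : ℝ)/2))
      = (2 * c ^ ((p:ℝ)/2) / (2 ^ ((p : ℝ)/2) * Real.Gamma ((p : ℝ)/2))) *
          ∫ y in Ioi γ, y^(p-1) * Real.exp (-(c/2) * y^2) := by
  have himg : Set.Ici (c * γ^2) = (fun r => c * r^2) '' Set.Ici γ := by
    ext x
    constructor
    · intro hx
      simp only [Set.mem_Ici] at hx
      have hxpos : (0:ℝ) < x := lt_of_lt_of_le (by positivity) hx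
      have hx0 : 0 ≤ x / c := by positivity
      refine ⟨Real.sqrt (x / c), ?_, ?_⟩
      · rw [Set.mem_Ici]
        have : γ = Real.sqrt (γ^2) := (Real.sqrt_sq hγ.le).symm
        rw [this]
        apply Real.sqrt_le_sqrt
        rw [le_div_iff₀ hc] at *
        nlinarith
      · show c * Real.sqrt (x/c)^2 = x
        rw [Real.sq_sqrt hx0]
        field_simp
    · rintro ⟨r, hr, rfl⟩
      simp only [Set.mem_Ici] at *
      nlinarith [mul_nonneg (sub_nonneg.mpr hr) (by linarith : (0:ℝ) ≤ r + γ), hc.le]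
  have hderiv : ∀ r ∈ Set.Ici γ, HasDerivWithinAt (fun r => c * r^2) (2*c*r) (Set.Ici γ) r := by
    intro r _
    have := ((hasDerivAt_pow 2 r).const_mul c).hasDerivWithinAt (s := Set.Ici γ)
    exact this.congr_deriv (by ring)
  have hinj : Set.InjOn (fun r => c * r^2) (Set.Ici γ) := by
    intro a ha b hb hab
    simp only [Set.mem_Ici] at ha hb
    simp only at hab
    have h2 : a^2 = b^2 := mul_left_cancel₀ hc.ne' hab
    nlinarith [sq_nonneg (a - b), sq_nonneg (a + b)]
  rw [himg, integral_image_eq_integral_abs_deriv_smul measurableSet_Ici hderiv hinj,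
    integral_Ici_eq_integral_Ioi, ← integral_const_mul]
  refine setIntegral_congr_fun measurableSet_Ioi fun y hy => ?_
  have hy0 : 0 < y := lt_trans hγ hy
  have habs : |2 * c * y| = 2 * c * y := abs_of_pos (by positivity)
  have hcy : (c * y^2) ^ ((p:ℝ)/2 - 1)
      = c ^ ((p:ℝ)/2 - 1) * y ^ ((p:ℝ) - 2) := by
    rw [Real.mul_rpow hc.le (by positivity), ← Real.rpow_natCast y 2,
      ← Real.rpow_mul hy0.le]
    congr 1
    push_cast
    ring
  have hyp : (y : ℝ) ^ (p - 1 : ℕ) = y ^ ((p:ℝ) - 1) := by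
    rw [← Real.rpow_natCast y (p - 1), Nat.cast_sub hp, Nat.cast_one]
  have hys : y * y ^ ((p:ℝ) - 2) = y ^ ((p:ℝ) - 1) := by
    nth_rewrite 1 [← Real.rpow_one y]
    rw [← Real.rpow_add hy0]
    ring_nf
  have hcc : c * c ^ ((p:ℝ)/2 - 1) = c ^ ((p:ℝ)/2) := by
    nth_rewrite 1 [← Real.rpow_one c]
    rw [← Real.rpow_add hc]
    ring_nf
  have hexp : Real.exp (-(c * y^2)/2) = Real.exp (-(c/2) * y^2) := by
    congr 1; ring
  rw [smul_eq_mul, habs, hcy, hexp, hyp]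
  rw [← hys, ← hcc]
  field_simp


lemma scalar_id {p : ℕ} (hp : 1 ≤ p) (c : ℝ) (hc : 0 < c) :
    (p:ℝ) * (volume (Metric.ball (0 : EuclideanSpace ℝ (Fin p)) 1)).toReal
      = (2 * π / c) ^ ((p:ℝ)/2) *
        (2 * c ^ ((p:ℝ)/2) / (2 ^ ((p:ℝ)/2) * Real.Gamma ((p:ℝ)/2))) := by
  haveI : Nonempty (Fin p) := Fin.pos_iff_nonempty.mp hp
  have hΓ : 0 < Real.Gamma ((p:ℝ)/2) := Real.Gamma_pos_of_pos (by positivity)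
  have hvol : (volume (Metric.ball (0 : EuclideanSpace ℝ (Fin p)) 1)).toReal
      = π ^ ((p:ℝ)/2) / Real.Gamma ((p:ℝ)/2 + 1) := by
    rw [EuclideanSpace.volume_ball]
    have hΓ1 : 0 < Real.Gamma ((Fintype.card (Fin p) : ℝ)/2 + 1) :=
      Real.Gamma_pos_of_pos (by positivity)
    rw [ENNReal.ofReal_one, one_pow, one_mul, ENNReal.toReal_ofReal (by positivity)]
    simp only [Fintype.card_fin]
    rw [Real.sqrt_eq_rpow, ← Real.rpow_natCast (π ^ ((1:ℝ)/2)) p, ← Real.rpow_mul pi_pos.le]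
    congr 2
    ring
  rw [hvol]
  have h1 : (2 * π / c) ^ ((p:ℝ)/2) * c ^ ((p:ℝ)/2) = (2 * π) ^ ((p:ℝ)/2) := by
    rw [← Real.mul_rpow (by positivity) hc.le, div_mul_cancel₀ _ hc.ne']
  have h2 : (2 * π) ^ ((p:ℝ)/2) = 2 ^ ((p:ℝ)/2) * π ^ ((p:ℝ)/2) :=
    Real.mul_rpow (by norm_num) pi_pos.le
  have h3 : Real.Gamma ((p:ℝ)/2 + 1) = ((p:ℝ)/2) * Real.Gamma ((p:ℝ)/2) :=
    Real.Gamma_add_one (by positivity)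
  have h2pow : (0:ℝ) < 2 ^ ((p:ℝ)/2) := by positivity
  have hppos : (0:ℝ) < p := by exact_mod_cast hp
  rw [h3]
  field_simp
  linear_combination (-1) * h1 + (-1) * h2

/-- Truncation bound: if −∇²ℓ ⪰ ηn·I on B(θ̂,δ) then the integral of
exp(ℓ − ℓ(θ̂)) over the annulus B(θ̂,δ)∖B(θ̂,γ) is at most
(2π/(ηn))^{p/2}·P(χ²_p ≥ ηnγ²), the probability written via the χ²_p density. -/
theorem annulus_integral_bound (p : ℕ) (hp : 1 ≤ p)
    (ℓ : EuclideanSpace ℝ (Fin p) → ℝ) (θh : EuclideanSpace ℝ (Fin p))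
    (η n δ γ : ℝ) (hη : 0 < η) (hn : 1 ≤ n) (hγ : 0 < γ) (hγδ : γ ≤ δ)
    (hsm : ContDiff ℝ 2 ℓ)
    (hmax : ∀ θ, ℓ θ ≤ ℓ θh)
    (hgrad : fderiv ℝ ℓ θh = 0)
    (hhess : ∀ θ ∈ Metric.closedBall θh δ, ∀ v : EuclideanSpace ℝ (Fin p),
      iteratedFDeriv ℝ 2 ℓ θ ![v, v] ≤ -(η * n) * ‖v‖^2) :
    ∫ θ in Metric.closedBall θh δ \ Metric.closedBall θh γ, Real.exp (ℓ θ - ℓ θh) ≤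
      (2 * Real.pi / (η * n)) ^ ((p : ℝ)/2) *
        ∫ x in Set.Ici (η * n * γ^2),
          x ^ ((p : ℝ)/2 - 1) * Real.exp (-x/2) /
            (2 ^ ((p : ℝ)/2) * Real.Gamma ((p : ℝ)/2)) := by
  set c := η * n with hcdef
  have hc : 0 < c := by positivity
  -- Gaussian integrability, shifted
  have gauss : Integrable (fun x : EuclideanSpace ℝ (Fin p) => Real.exp (-(c/2) * ‖x‖^2)) := gauss_integrable c hc
  have gaussθ : Integrable (fun θ : EuclideanSpace ℝ (Fin p) => Real.exp (-(c/2) * ‖θ - θh‖^2)) := by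
    have h := ((measurePreserving_add_right volume (-θh)).integrable_comp
      gauss.aestronglyMeasurable).mpr gauss
    refine h.congr (Filter.Eventually.of_forall fun θ => ?_)
    simp [Function.comp, sub_eq_add_neg]
  -- Step 1: pointwise bound on the annulus
  have hann : MeasurableSet (Metric.closedBall θh δ \ Metric.closedBall θh γ) :=
    measurableSet_closedBall.diff measurableSet_closedBall
  have step1 : ∫ θ in Metric.closedBall θh δ \ Metric.closedBall θh γ,
      Real.exp (ℓ θ - ℓ θh) ≤
      ∫ θ in Metric.closedBall θh δ \ Metric.closedBall θh γ,
        Real.exp (-(c/2) * ‖θ - θh‖^2) := by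
    refine setIntegral_mono_on ?_ (gaussθ.integrableOn) hann fun θ hθ => ?_
    · have hcont : Continuous fun θ => Real.exp (ℓ θ - ℓ θh) :=
        Real.continuous_exp.comp (hsm.continuous.sub continuous_const)
      exact (hcont.continuousOn.integrableOn_compact (isCompact_closedBall θh δ)).mono_set
        Set.diff_subset
    · exact Real.exp_le_exp.mpr (taylor_pt ℓ θh θ c δ hsm hgrad hhess hθ.1)
  -- Step 2: enlarge to complement of inner ball
  have step2 : ∫ θ in Metric.closedBall θh δ \ Metric.closedBall θh γ,
      Real.exp (-(c/2) * ‖θ - θh‖^2) ≤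
      ∫ θ in (Metric.closedBall θh γ)ᶜ, Real.exp (-(c/2) * ‖θ - θh‖^2) := by
    refine setIntegral_mono_set gaussθ.integrableOn
      (Filter.Eventually.of_forall fun θ => (Real.exp_pos _).le)
      (HasSubset.Subset.eventuallyLE (Set.diff_subset_compl _ _))
  -- Step 3: translate
  have step3 : ∫ θ in (Metric.closedBall θh γ)ᶜ, Real.exp (-(c/2) * ‖θ - θh‖^2)
      = ∫ x in (Metric.closedBall (0 : EuclideanSpace ℝ (Fin p)) γ)ᶜ, Real.exp (-(c/2) * ‖x‖^2) := by
    rw [← integral_indicator measurableSet_closedBall.compl,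
      ← integral_indicator measurableSet_closedBall.compl,
      ← integral_add_right_eq_self (fun θ : EuclideanSpace ℝ (Fin p) =>
        ((Metric.closedBall θh γ)ᶜ).indicator
          (fun θ => Real.exp (-(c/2) * ‖θ - θh‖^2)) θ) θh]
    refine integral_congr_ae (Filter.Eventually.of_forall fun x => ?_)
    have hmem : x + θh ∈ (Metric.closedBall θh γ)ᶜ ↔ x ∈ (Metric.closedBall (0 : EuclideanSpace ℝ (Fin p)) γ)ᶜ := by
      simp [Metric.mem_closedBall, dist_eq_norm]
    beta_reduce
    rcases em (x ∈ (Metric.closedBall (0 : EuclideanSpace ℝ (Fin p)) γ)ᶜ) with h | h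
    · rw [Set.indicator_of_mem h, Set.indicator_of_mem (hmem.mpr h), add_sub_cancel_right]
    · rw [Set.indicator_of_notMem h, Set.indicator_of_notMem (hmem.not.mpr h)]
  -- Step 4: polar coordinates + χ² identification
  have step4 : ∫ x in (Metric.closedBall (0 : EuclideanSpace ℝ (Fin p)) γ)ᶜ, Real.exp (-(c/2) * ‖x‖^2)
      = (2 * Real.pi / c) ^ ((p : ℝ)/2) *
        ∫ x in Set.Ici (c * γ^2),
          x ^ ((p : ℝ)/2 - 1) * Real.exp (-x/2) /
            (2 ^ ((p : ℝ)/2) * Real.Gamma ((p : ℝ)/2)) := by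
    rw [polar_tail hp c γ hc hγ, chisq_tail hp c γ hc hγ, scalar_id hp c hc, mul_assoc]
  calc ∫ θ in Metric.closedBall θh δ \ Metric.closedBall θh γ, Real.exp (ℓ θ - ℓ θh)
      ≤ ∫ θ in Metric.closedBall θh δ \ Metric.closedBall θh γ,
          Real.exp (-(c/2) * ‖θ - θh‖^2) := step1
    _ ≤ ∫ θ in (Metric.closedBall θh γ)ᶜ, Real.exp (-(c/2) * ‖θ - θh‖^2) := step2
    _ = ∫ x in (Metric.closedBall (0 : EuclideanSpace ℝ (Fin p)) γ)ᶜ, Real.exp (-(c/2) * ‖x‖^2) := step3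
    _ = _ := step4
end

section
/- For a function f: [0,1]^p → ℝ that is p times continuously differentiable, the Hardy–Krause variation satisfies V_HK(f) ≤ Σ_{∅ ≠ α ⊆ {1,...,p}} ∫_{[0,1]^{|α|}} |∂^{|α|} f / ∂x_α (x_α, 1_{−α})| dx_α. -/
open MeasureTheory

/-- Alternating (inclusion-exclusion) difference of `f` over the box with corners
`a` (lower) and `b` (upper), taken in the coordinates of `α` only. -/
def boxDiffOn (p : ℕ) (α : Finset (Fin p)) (f : (Fin p → ℝ) → ℝ)
    (a b : Fin p → ℝ) : ℝ :=
  ∑ s ∈ α.powerset, (-1 : ℝ) ^ s.card * f (fun j => if j ∈ s then a j else b j)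

/-- The set of grid sums defining the Vitali variation of `f` in the coordinates of
`α`, with the remaining coordinates anchored at 1. -/
def vitaliSet (p : ℕ) (α : Finset (Fin p)) (f : (Fin p → ℝ) → ℝ) : Set ℝ :=
  {v | ∃ (m : Fin p → ℕ) (t : Fin p → ℕ → ℝ),
      (∀ j ∈ α, Monotone (t j) ∧ t j 0 = 0 ∧ t j (m j) = 1) ∧
      v = ∑ i ∈ Fintype.piFinset (fun j => Finset.range (if j ∈ α then m j else 1)),
          |boxDiffOn p α f (fun j => if j ∈ α then t j (i j) else 1)
            (fun j => if j ∈ α then t j (i j + 1) else 1)|}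

/-- The Vitali variation of `f` in the coordinates of `α` (anchored at 1 elsewhere). -/
noncomputable def vitaliVar (p : ℕ) (α : Finset (Fin p)) (f : (Fin p → ℝ) → ℝ) : ℝ :=
  sSup (vitaliSet p α f)

/-- The Hardy–Krause variation of `f` (anchored at 1): sum of the Vitali variations
over all nonempty subsets of coordinates. -/
noncomputable def hkVar (p : ℕ) (f : (Fin p → ℝ) → ℝ) : ℝ :=
  ∑ α ∈ (Finset.univ : Finset (Fin p)).powerset.filter (fun α => α.Nonempty),
    vitaliVar p α f

/-- Iterated partial derivative of `f` in the coordinates listed in `l`. -/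
noncomputable def partialDerivList (p : ℕ) (l : List (Fin p))
    (f : (Fin p → ℝ) → ℝ) : (Fin p → ℝ) → ℝ :=
  l.foldr (fun j g => fun y => fderiv ℝ g y (Pi.single j 1)) f

namespace HKAux

variable {p : ℕ}

/-- Iterated difference operator over a list of coordinates. -/
noncomputable def Dop (a b : Fin p → ℝ) (l : List (Fin p)) (f : (Fin p → ℝ) → ℝ) :
    (Fin p → ℝ) → ℝ :=
  l.foldr (fun j g x => g (Function.update x j (b j)) - g (Function.update x j (a j))) f

/-- Iterated (interval) integral operator over a list of coordinates. -/
noncomputable def Iop (a b : Fin p → ℝ) (l : List (Fin p)) (g : (Fin p → ℝ) → ℝ) :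
    (Fin p → ℝ) → ℝ :=
  l.foldr (fun j h x => ∫ t in (a j)..(b j), h (Function.update x j t)) g

lemma Dop_nil (a b : Fin p → ℝ) (f : (Fin p → ℝ) → ℝ) : Dop a b [] f = f := rfl

lemma Dop_cons (a b : Fin p → ℝ) (j : Fin p) (l : List (Fin p)) (f : (Fin p → ℝ) → ℝ)
    (x : Fin p → ℝ) :
    Dop a b (j :: l) f x
      = Dop a b l f (Function.update x j (b j)) - Dop a b l f (Function.update x j (a j)) := rfl

lemma Iop_nil (a b : Fin p → ℝ) (g : (Fin p → ℝ) → ℝ) : Iop a b [] g = g := rfl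

lemma Iop_cons (a b : Fin p → ℝ) (j : Fin p) (l : List (Fin p)) (g : (Fin p → ℝ) → ℝ)
    (x : Fin p → ℝ) :
    Iop a b (j :: l) g x = ∫ t in (a j)..(b j), Iop a b l g (Function.update x j t) := rfl

lemma pd_nil (f : (Fin p → ℝ) → ℝ) : partialDerivList p [] f = f := rfl

lemma pd_cons (j : Fin p) (l : List (Fin p)) (f : (Fin p → ℝ) → ℝ) :
    partialDerivList p (j :: l) f
      = fun y => fderiv ℝ (partialDerivList p l f) y (Pi.single j 1) := rfl

/-- Smoothness of iterated partial derivatives. -/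
lemma pd_contDiff : ∀ (l : List (Fin p)) (m : ℕ) (f : (Fin p → ℝ) → ℝ),
    ContDiff ℝ (↑(m + l.length)) f → ContDiff ℝ m (partialDerivList p l f) := by
  intro l
  induction l with
  | nil => intro m f hf; simpa [pd_nil] using hf
  | cons j l ih =>
    intro m f hf
    have e : (m + 1) + l.length = m + (j :: l).length := by
      simp only [List.length_cons]; omega
    have h1 : ContDiff ℝ (↑((m + 1) + l.length)) f := by rw [e]; exact hf
    have h1' := ih (m + 1) f h1
    rw [pd_cons]
    have h2 : ContDiff ℝ (m : ℕ) (fderiv ℝ (partialDerivList p l f)) := by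
      apply h1'.fderiv_right
      norm_cast
    exact h2.clm_apply contDiff_const

lemma pd_continuous (l : List (Fin p)) (f : (Fin p → ℝ) → ℝ)
    (h : ContDiff ℝ l.length f) : Continuous (partialDerivList p l f) :=
  (pd_contDiff l 0 f (by simpa using h)).continuous

lemma cont_update (x : Fin p → ℝ) (j : Fin p) :
    Continuous fun t : ℝ => Function.update x j t :=
  (continuous_const : Continuous fun _ : ℝ => x).update j continuous_id

lemma cont_update2 (x : Fin p → ℝ) (k j : Fin p) :
    Continuous fun q : ℝ × ℝ => Function.update (Function.update x k q.1) j q.2 :=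
  ((continuous_const : Continuous fun _ : ℝ × ℝ => x).update k continuous_fst).update j
    continuous_snd

/-- One-variable slice of a differentiable function has the expected derivative. -/
lemma hasDerivAt_update (g : (Fin p → ℝ) → ℝ) (hg : Differentiable ℝ g) (x : Fin p → ℝ)
    (j : Fin p) (t : ℝ) :
    HasDerivAt (fun s => g (Function.update x j s))
      (fderiv ℝ g (Function.update x j t) (Pi.single j 1)) t := by
  have hu : ∀ s : ℝ, Function.update x j s = x + (s - x j) • (Pi.single j 1 : Fin p → ℝ) := by
    intro s; funext i
    by_cases h : i = j
    · subst h
      simp [Function.update_self, Pi.single_eq_same]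
    · simp [Function.update_of_ne h, Pi.single_eq_of_ne h]
  have hder : HasDerivAt (fun s : ℝ => x + (s - x j) • (Pi.single j 1 : Fin p → ℝ))
      (Pi.single j 1) t := by
    have h1 : HasDerivAt (fun s : ℝ => s - x j) 1 t := (hasDerivAt_id t).sub_const _
    have h2 := h1.smul_const (Pi.single j 1 : Fin p → ℝ)
    simpa using h2.const_add x
  have hfd := (hg (Function.update x j t)).hasFDerivAt
  rw [hu t] at hfd
  have key := hfd.comp_hasDerivAt t hder
  have : (fun s => g (x + (s - x j) • (Pi.single j 1 : Fin p → ℝ)))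
      = fun s => g (Function.update x j s) := by
    funext s; rw [hu s]
  rw [Function.comp_def, this] at key
  rwa [hu t]

/-- Continuity of the iterated integral operator. -/
lemma Iop_continuous (a b : Fin p → ℝ) :
    ∀ (l : List (Fin p)) (g : (Fin p → ℝ) → ℝ), Continuous g → Continuous (Iop a b l g) := by
  intro l
  induction l with
  | nil => intro g hg; exact hg
  | cons j l ih =>
    intro g hg
    have h1 : Continuous (Iop a b l g) := ih g hg
    have h2 : Continuous (Function.uncurry fun (x : Fin p → ℝ) (t : ℝ) =>
        Iop a b l g (Function.update x j t)) :=
      h1.comp (continuous_fst.update j continuous_snd)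
    exact intervalIntegral.continuous_parametric_intervalIntegral_of_continuous' h2 (a j) (b j)

/-- Fubini for continuous functions over rectangles (interval integrals). -/
lemma intervalIntegral_swap {H : ℝ → ℝ → ℝ} (hH : Continuous (Function.uncurry H))
    {a₁ b₁ a₂ b₂ : ℝ} (h₁ : a₁ ≤ b₁) (h₂ : a₂ ≤ b₂) :
    ∫ s in a₁..b₁, ∫ t in a₂..b₂, H s t = ∫ t in a₂..b₂, ∫ s in a₁..b₁, H s t := by
  simp only [intervalIntegral.integral_of_le h₁, intervalIntegral.integral_of_le h₂]
  have hint : Integrable (Function.uncurry H)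
      ((volume.restrict (Set.Ioc a₁ b₁)).prod (volume.restrict (Set.Ioc a₂ b₂))) := by
    rw [Measure.prod_restrict]
    have : IntegrableOn (Function.uncurry H) (Set.Icc a₁ b₁ ×ˢ Set.Icc a₂ b₂)
        (volume.prod volume) := by
      rw [← Measure.volume_eq_prod]
      exact hH.continuousOn.integrableOn_compact (isCompact_Icc.prod isCompact_Icc)
    exact this.mono_set (Set.prod_mono Set.Ioc_subset_Icc_self Set.Ioc_subset_Icc_self)
  exact integral_integral_swap hint

/-- Fundamental-theorem step under iterated integrals. -/
lemma Iop_update_sub (a b : Fin p → ℝ) (hab : ∀ k, a k ≤ b k) :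
    ∀ (l : List (Fin p)) (j : Fin p), j ∉ l →
      ∀ g : (Fin p → ℝ) → ℝ, ContDiff ℝ 1 g → ∀ x : Fin p → ℝ,
      Iop a b l g (Function.update x j (b j)) - Iop a b l g (Function.update x j (a j))
        = ∫ t in (a j)..(b j),
            Iop a b l (fun y => fderiv ℝ g y (Pi.single j 1)) (Function.update x j t) := by
  intro l
  induction l with
  | nil =>
    intro j _ g hg x
    simp only [Iop_nil]
    have hcont : Continuous fun y => fderiv ℝ g y (Pi.single j 1) :=
      pd_continuous [j] g (by simpa using hg)
    have hint : IntervalIntegrable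
        (fun t => fderiv ℝ g (Function.update x j t) (Pi.single j 1)) volume (a j) (b j) :=
      (hcont.comp (cont_update x j)).intervalIntegrable _ _
    exact (intervalIntegral.integral_eq_sub_of_hasDerivAt
      (fun t _ => hasDerivAt_update g (hg.differentiable one_ne_zero) x j t) hint).symm
  | cons k l ih =>
    intro j hj g hg x
    have hjk : j ≠ k := fun h => hj (h ▸ List.mem_cons_self)
    have hjl : j ∉ l := fun h => hj (List.mem_cons_of_mem _ h)
    have hIg : Continuous (Iop a b l g) := Iop_continuous a b l g hg.continuous
    have hDj : Continuous (fun y => fderiv ℝ g y (Pi.single j 1)) :=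
      pd_continuous [j] g (by simpa using hg)
    have hIDj : Continuous (Iop a b l (fun y => fderiv ℝ g y (Pi.single j 1))) :=
      Iop_continuous a b l _ hDj
    simp only [Iop_cons]
    have int1 : IntervalIntegrable
        (fun s => Iop a b l g (Function.update (Function.update x j (b j)) k s))
        volume (a k) (b k) :=
      (hIg.comp (cont_update (Function.update x j (b j)) k)).intervalIntegrable _ _
    have int2 : IntervalIntegrable
        (fun s => Iop a b l g (Function.update (Function.update x j (a j)) k s))
        volume (a k) (b k) :=
      (hIg.comp (cont_update (Function.update x j (a j)) k)).intervalIntegrable _ _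
    rw [← intervalIntegral.integral_sub int1 int2]
    have step1 : ∀ s : ℝ,
        Iop a b l g (Function.update (Function.update x j (b j)) k s)
          - Iop a b l g (Function.update (Function.update x j (a j)) k s)
        = ∫ t in (a j)..(b j),
            Iop a b l (fun y => fderiv ℝ g y (Pi.single j 1))
              (Function.update (Function.update x k s) j t) := by
      intro s
      rw [Function.update_comm hjk (b j) s x, Function.update_comm hjk (a j) s x]
      exact ih j hjl g hg (Function.update x k s)
    rw [intervalIntegral.integral_congr (fun s _ => step1 s)]
    have hH : Continuous (Function.uncurry fun (s t : ℝ) =>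
        Iop a b l (fun y => fderiv ℝ g y (Pi.single j 1))
          (Function.update (Function.update x k s) j t)) := by
      exact hIDj.comp (cont_update2 x k j)
    rw [intervalIntegral_swap hH (hab k) (hab j)]
    refine intervalIntegral.integral_congr fun t _ => ?_
    show (∫ s in (a k)..(b k), Iop a b l (fun y => fderiv ℝ g y (Pi.single j 1))
        (Function.update (Function.update x k s) j t)) = _
    refine intervalIntegral.integral_congr fun s _ => ?_
    rw [Function.update_comm hjk.symm s t x]

/-- The iterated difference equals the iterated integral of the mixed partial. -/
lemma Dop_eq_Iop (a b : Fin p → ℝ) (hab : ∀ k, a k ≤ b k) :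
    ∀ (l : List (Fin p)), l.Nodup → ∀ f : (Fin p → ℝ) → ℝ,
      ContDiff ℝ l.length f → ∀ x : Fin p → ℝ,
      Dop a b l f x = Iop a b l (partialDerivList p l f) x := by
  intro l
  induction l with
  | nil => intros; rfl
  | cons j l ih =>
    intro hnd f hf x
    have hjl : j ∉ l := (List.nodup_cons.mp hnd).1
    have hln : l.Nodup := (List.nodup_cons.mp hnd).2
    have hfl : ContDiff ℝ l.length f := hf.of_le (by exact_mod_cast Nat.le_succ l.length)
    have hg : ContDiff ℝ 1 (partialDerivList p l f) := by
      apply pd_contDiff l 1 f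
      have e : 1 + l.length = (j :: l).length := by simp only [List.length_cons]; omega
      rw [e]; exact hf
    rw [Dop_cons, ih hln f hfl, ih hln f hfl,
      Iop_update_sub a b hab l j hjl _ hg x, Iop_cons]
    rfl

/-- The inclusion-exclusion sum form of the iterated difference. -/
lemma Dop_eq_sum (a b : Fin p → ℝ) :
    ∀ (l : List (Fin p)), l.Nodup → ∀ (f : (Fin p → ℝ) → ℝ) (x : Fin p → ℝ),
      Dop a b l f x = ∑ s ∈ l.toFinset.powerset, (-1 : ℝ) ^ s.card
        * f (fun j => if j ∈ s then a j else if j ∈ l.toFinset then b j else x j) := by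
  intro l
  induction l with
  | nil =>
    intro _ f x
    simp only [Dop_nil, List.toFinset_nil, Finset.powerset_empty, Finset.sum_singleton]
    simp
  | cons j l ih =>
    intro hnd f x
    have hjl : j ∉ l := (List.nodup_cons.mp hnd).1
    have hln : l.Nodup := (List.nodup_cons.mp hnd).2
    have hjF : j ∉ l.toFinset := by simpa using hjl
    rw [Dop_cons, ih hln f (Function.update x j (b j)), ih hln f (Function.update x j (a j))]
    rw [List.toFinset_cons, Finset.sum_powerset_insert hjF, ← Finset.sum_sub_distrib,
      ← Finset.sum_add_distrib]
    apply Finset.sum_congr rfl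
    intro s hs
    have hsl : s ⊆ l.toFinset := Finset.mem_powerset.mp hs
    have hjs : j ∉ s := fun h => hjF (hsl h)
    have hcard : (insert j s).card = s.card + 1 := Finset.card_insert_of_notMem hjs
    have hpt_b : (fun i => if i ∈ s then a i else if i ∈ l.toFinset then b i
        else Function.update x j (b j) i)
        = fun i => if i ∈ s then a i else if i ∈ insert j l.toFinset then b i else x i := by
      funext i
      by_cases hij : i = j
      · subst hij
        simp [hjs, hjF, Function.update_self]
      · simp [Function.update_of_ne hij, Finset.mem_insert, hij]
    have hpt_a : (fun i => if i ∈ s then a i else if i ∈ l.toFinset then b i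
        else Function.update x j (a j) i)
        = fun i => if i ∈ insert j s then a i else if i ∈ insert j l.toFinset then b i
            else x i := by
      funext i
      by_cases hij : i = j
      · subst hij
        simp [hjs, hjF, Function.update_self]
      · have his : i ∈ insert j s ↔ i ∈ s := by simp [Finset.mem_insert, hij]
        by_cases hi : i ∈ s
        · simp [hi, his.mpr hi, Finset.mem_insert, hij]
        · simp [hi, hij, Function.update_of_ne hij, Finset.mem_insert]
    rw [hpt_b, hpt_a, hcard]
    ring

/-- Nonnegativity of the iterated integral of a nonnegative function. -/
lemma Iop_nonneg (a b : Fin p → ℝ) :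
    ∀ (l : List (Fin p)), (∀ j ∈ l, a j ≤ b j) → ∀ h : (Fin p → ℝ) → ℝ,
      (∀ y, 0 ≤ h y) → ∀ x, 0 ≤ Iop a b l h x := by
  intro l
  induction l with
  | nil => intro _ h hh x; exact hh x
  | cons j l ih =>
    intro hab h hh x
    rw [Iop_cons]
    apply intervalIntegral.integral_nonneg (hab j (List.mem_cons_self))
    intro t _
    exact ih (fun k hk => hab k (List.mem_cons_of_mem _ hk)) h hh _

/-- The iterated integral is bounded by the iterated integral of the absolute value. -/
lemma abs_Iop_le (a b : Fin p → ℝ) :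
    ∀ (l : List (Fin p)), (∀ j ∈ l, a j ≤ b j) → ∀ h : (Fin p → ℝ) → ℝ, Continuous h →
      ∀ x, |Iop a b l h x| ≤ Iop a b l (fun y => |h y|) x := by
  intro l
  induction l with
  | nil => intro _ h _ x; exact le_rfl
  | cons j l ih =>
    intro hab h hc x
    have habj : a j ≤ b j := hab j (List.mem_cons_self)
    have habl : ∀ k ∈ l, a k ≤ b k := fun k hk => hab k (List.mem_cons_of_mem _ hk)
    rw [Iop_cons, Iop_cons]
    refine le_trans (intervalIntegral.abs_integral_le_integral_abs habj) ?_
    apply intervalIntegral.integral_mono_on habj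
    · exact ((Iop_continuous a b l h hc).abs.comp (cont_update x j)).intervalIntegrable _ _
    · exact ((Iop_continuous a b l _ hc.abs).comp (cont_update x j)).intervalIntegrable _ _
    · intro t _
      exact ih habl h hc _


open scoped ENNReal

/-- The iterated integral as an iterated lower integral (marginal). -/
lemma ofReal_Iop (a b : Fin p → ℝ) (ν : Fin p → Measure ℝ) [∀ j, SigmaFinite (ν j)] :
    ∀ (l : List (Fin p)), l.Nodup → (∀ j ∈ l, a j ≤ b j) →
      (∀ j ∈ l, ν j = volume.restrict (Set.Ioc (a j) (b j))) →
      ∀ h : (Fin p → ℝ) → ℝ, Continuous h → (∀ y, 0 ≤ h y) → ∀ x : Fin p → ℝ,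
      ENNReal.ofReal (Iop a b l h x)
        = (∫⋯∫⁻_l.toFinset, (fun y => ENNReal.ofReal (h y)) ∂ν) x := by
  intro l
  induction l with
  | nil =>
    intro _ _ _ h _ hnn x
    simp [Iop_nil]
  | cons j l ih =>
    intro hnd hab hν h hc hnn x
    have hjl : j ∉ l := (List.nodup_cons.mp hnd).1
    have hjF : j ∉ l.toFinset := by simpa using hjl
    have hFmeas : Measurable fun y : Fin p → ℝ => ENNReal.ofReal (h y) :=
      hc.measurable.ennreal_ofReal
    rw [List.toFinset_cons, MeasureTheory.lmarginal_insert _ hFmeas hjF x]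
    have habj : a j ≤ b j := hab j (List.mem_cons_self)
    have habl : ∀ k ∈ l, a k ≤ b k := fun k hk => hab k (List.mem_cons_of_mem _ hk)
    have hνl : ∀ k ∈ l, ν k = volume.restrict (Set.Ioc (a k) (b k)) :=
      fun k hk => hν k (List.mem_cons_of_mem _ hk)
    rw [Iop_cons, intervalIntegral.integral_of_le habj]
    have hIc : Continuous fun t => Iop a b l h (Function.update x j t) :=
      (Iop_continuous a b l h hc).comp (cont_update x j)
    have hint : IntegrableOn (fun t => Iop a b l h (Function.update x j t))
        (Set.Ioc (a j) (b j)) volume :=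
      (hIc.continuousOn.integrableOn_compact isCompact_Icc).mono_set Set.Ioc_subset_Icc_self
    rw [ofReal_integral_eq_lintegral_ofReal hint
      (Filter.Eventually.of_forall fun t => Iop_nonneg a b l habl h hnn _)]
    rw [hν j (List.mem_cons_self)]
    exact lintegral_congr fun t =>
      ih (List.nodup_cons.mp hnd).2 habl hνl h hc hnn (Function.update x j t)

/-- Integrating out variables on which the function does not depend, with respect to
probability measures, does nothing. -/
lemma lmarginal_indep (ν : Fin p → Measure ℝ) [∀ j, SigmaFinite (ν j)] (s : Finset (Fin p))
    (hprob : ∀ j ∈ s, IsProbabilityMeasure (ν j)) (F : (Fin p → ℝ) → ℝ≥0∞)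
    (hind : ∀ (x : Fin p → ℝ) (y : (j : s) → ℝ), F (Function.updateFinset x s y) = F x)
    (x : Fin p → ℝ) :
    (∫⋯∫⁻_s, F ∂ν) x = F x := by
  haveI : ∀ j : s, IsProbabilityMeasure (ν j) := fun j => hprob j j.2
  have h0 : (∫⋯∫⁻_s, F ∂ν) x
      = ∫⁻ y : (j : s) → ℝ, F (Function.updateFinset x s y)
          ∂Measure.pi (fun j : s => ν j) := rfl
  rw [h0]
  have h1 : (fun y : (j : s) → ℝ => F (Function.updateFinset x s y)) = fun _ => F x :=
    funext fun y => hind x y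
  rw [h1, lintegral_const]
  simp

/-- Product of restricted Lebesgue measures is the restriction of the product. -/
lemma pi_restrict (S : Fin p → Set ℝ) (hS : ∀ i, MeasurableSet (S i)) :
    Measure.pi (fun i => (volume : Measure ℝ).restrict (S i))
      = (volume : Measure (Fin p → ℝ)).restrict (Set.univ.pi S) := by
  refine Measure.pi_eq fun s hs => ?_
  rw [Measure.restrict_apply (MeasurableSet.univ_pi hs), ← Set.pi_inter_distrib, volume_pi_pi]
  exact Finset.prod_congr rfl fun i _ => (Measure.restrict_apply (hs i)).symm

/-- Key bound for the Vitali variation of a single coordinate set. -/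
lemma vitaliVar_le (α : Finset (Fin p)) (f : (Fin p → ℝ) → ℝ) (hf : ContDiff ℝ p f) :
    vitaliVar p α f ≤
      ∫ y in Set.univ.pi (fun _ : Fin p => Set.Icc (0 : ℝ) 1),
        |partialDerivList p (α.sort (· ≤ ·)) f (fun j => if j ∈ α then y j else 1)| := by
  classical
  have hlnd : (α.sort (· ≤ ·)).Nodup := α.sort_nodup _
  have hltF : (α.sort (· ≤ ·)).toFinset = α := α.sort_toFinset _
  have hlen : (α.sort (· ≤ ·)).length = α.card := Finset.length_sort _
  have hcard : α.card ≤ p := by simpa using Finset.card_le_univ α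
  have hfl : ContDiff ℝ ((α.sort (· ≤ ·)).length) f := by
    apply hf.of_le
    rw [hlen]
    exact_mod_cast hcard
  have hpdc : Continuous (partialDerivList p (α.sort (· ≤ ·)) f) := pd_continuous _ f hfl
  have hproj : Continuous fun y : Fin p → ℝ => (fun j => if j ∈ α then y j else (1 : ℝ)) := by
    apply continuous_pi
    intro j
    by_cases hj : j ∈ α
    · simpa [hj] using (continuous_apply j)
    · simpa [hj] using (continuous_const : Continuous fun _ : Fin p → ℝ => (1 : ℝ))
  have hGc : Continuous fun y : Fin p → ℝ =>
      partialDerivList p (α.sort (· ≤ ·)) f (fun j => if j ∈ α then y j else 1) :=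
    hpdc.comp hproj
  have hcpt : IsCompact (Set.univ.pi (fun _ : Fin p => Set.Icc (0 : ℝ) 1)) :=
    isCompact_univ_pi fun _ => isCompact_Icc
  rw [integral_eq_lintegral_of_nonneg_ae
    (Filter.Eventually.of_forall fun y => abs_nonneg _) hGc.abs.aestronglyMeasurable]
  set cube : Set (Fin p → ℝ) := Set.univ.pi (fun _ : Fin p => Set.Icc (0 : ℝ) 1) with hcubedef
  set F : (Fin p → ℝ) → ℝ≥0∞ := fun y => ENNReal.ofReal
      |partialDerivList p (α.sort (· ≤ ·)) f (fun j => if j ∈ α then y j else 1)| with hFdef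
  have hFmeas : Measurable F := hGc.abs.measurable.ennreal_ofReal
  have hcube_lt : ∫⁻ y in cube, F y < ⊤ := by
    have habs : IntegrableOn
        (fun y => |partialDerivList p (α.sort (· ≤ ·)) f (fun j => if j ∈ α then y j else 1)|)
        cube volume := hGc.abs.continuousOn.integrableOn_compact hcpt
    have heq : ∫⁻ y in cube, F y = ∫⁻ y in cube,
        (‖|partialDerivList p (α.sort (· ≤ ·)) f (fun j => if j ∈ α then y j else 1)|‖₊ : ℝ≥0∞) :=
      lintegral_congr fun y => (Real.enorm_eq_ofReal (abs_nonneg _)).symm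
    rw [heq]
    exact habs.hasFiniteIntegral
  apply Real.sSup_le _ ENNReal.toReal_nonneg
  rintro v ⟨m, t, hcond, rfl⟩
  -- the grid boxes
  set S : (Fin p → ℕ) → Set (Fin p → ℝ) := fun i => Set.univ.pi
    (fun j => if j ∈ α then Set.Ioc (t j (i j)) (t j (i j + 1)) else Set.Ioc (0 : ℝ) 1)
    with hSdef
  have hSmeas : ∀ i, MeasurableSet (S i) := by
    intro i
    apply MeasurableSet.univ_pi
    intro j
    by_cases hj : j ∈ α <;> simp [hj, measurableSet_Ioc]
  set I : Finset (Fin p → ℕ) :=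
    Fintype.piFinset (fun j => Finset.range (if j ∈ α then m j else 1)) with hIdef
  have hSsub : ∀ i ∈ I, S i ⊆ cube := by
    intro i hi z hz
    rw [Set.mem_univ_pi]
    intro j
    have hzj := (Set.mem_univ_pi.mp hz) j
    have hij := Fintype.mem_piFinset.mp hi j
    by_cases hj : j ∈ α
    · rw [if_pos hj] at hzj
      have hmono := (hcond j hj).1
      have h0 : t j 0 = 0 := (hcond j hj).2.1
      have h1 : t j (m j) = 1 := (hcond j hj).2.2
      have hijm : i j + 1 ≤ m j := by
        rw [if_pos hj] at hij
        exact Finset.mem_range.mp hij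
      constructor
      · have : (0 : ℝ) ≤ t j (i j) := h0 ▸ hmono (Nat.zero_le _)
        linarith [hzj.1]
      · calc z j ≤ t j (i j + 1) := hzj.2
          _ ≤ t j (m j) := hmono hijm
          _ = 1 := h1
    · rw [if_neg hj] at hzj
      exact ⟨le_of_lt hzj.1, hzj.2⟩
  have hdisj : (↑I : Set (Fin p → ℕ)).PairwiseDisjoint S := by
    intro i hi i' hi' hne
    have hI : i ∈ I := hi
    have hI' : i' ∈ I := hi'
    rw [Function.onFun, Set.disjoint_left]
    intro z hz hz'
    obtain ⟨j, hjne⟩ := Function.ne_iff.mp hne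
    have hjα : j ∈ α := by
      by_contra hjα
      have h1 := Fintype.mem_piFinset.mp hI j
      have h2 := Fintype.mem_piFinset.mp hI' j
      rw [if_neg hjα] at h1 h2
      have := Finset.mem_range.mp h1
      have := Finset.mem_range.mp h2
      omega
    have hz1 := (Set.mem_univ_pi.mp hz) j
    have hz2 := (Set.mem_univ_pi.mp hz') j
    rw [if_pos hjα] at hz1 hz2
    have hmono := (hcond j hjα).1
    rcases lt_or_gt_of_ne hjne with hlt | hgt
    · have : t j (i j + 1) ≤ t j (i' j) := hmono (by omega)
      have := hz1.2
      have := hz2.1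
      linarith
    · have : t j (i' j + 1) ≤ t j (i j) := hmono (by omega)
      have := hz2.2
      have := hz1.1
      linarith
  -- the per-box bound
  have claim1 : ∀ i ∈ I,
      |boxDiffOn p α f (fun j => if j ∈ α then t j (i j) else 1)
        (fun j => if j ∈ α then t j (i j + 1) else 1)|
        ≤ (∫⁻ y in S i, F y).toReal := by
    intro i hi
    set a : Fin p → ℝ := fun j => if j ∈ α then t j (i j) else 1 with hadef
    set b : Fin p → ℝ := fun j => if j ∈ α then t j (i j + 1) else 1 with hbdef
    have hab : ∀ k, a k ≤ b k := by
      intro k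
      by_cases hk : k ∈ α
      · simp only [hadef, hbdef, if_pos hk]
        exact (hcond k hk).1 (Nat.le_succ _)
      · simp [hadef, hbdef, if_neg hk]
    have habl : ∀ k ∈ α.sort (· ≤ ·), a k ≤ b k := fun k _ => hab k
    set ν : Fin p → Measure ℝ := fun j => volume.restrict
      (if j ∈ α then Set.Ioc (t j (i j)) (t j (i j + 1)) else Set.Ioc (0 : ℝ) 1) with hνdef
    have hν : ∀ j ∈ α.sort (· ≤ ·), ν j = volume.restrict (Set.Ioc (a j) (b j)) := by
      intro j hj
      have hjα : j ∈ α := (Finset.mem_sort _).mp hj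
      simp only [hνdef, hadef, hbdef, if_pos hjα]
    -- step a : boxDiffOn = Dop
    have ha : boxDiffOn p α f a b = Dop a b (α.sort (· ≤ ·)) f b := by
      rw [Dop_eq_sum a b (α.sort (· ≤ ·)) hlnd f b, hltF]
      unfold boxDiffOn
      refine Finset.sum_congr rfl fun s _ => ?_
      congr 1
      refine congrArg f (funext fun j => ?_)
      by_cases hjs : j ∈ s
      · simp [hjs]
      · by_cases hjα : j ∈ α
        · simp [hjs, hjα]
        · simp [hjs, hjα]
    -- step b : Dop = Iop
    have hb : Dop a b (α.sort (· ≤ ·)) f b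
        = Iop a b (α.sort (· ≤ ·)) (partialDerivList p (α.sort (· ≤ ·)) f) b :=
      Dop_eq_Iop a b hab (α.sort (· ≤ ·)) hlnd f hfl b
    -- step c : abs bound
    have hc : |Iop a b (α.sort (· ≤ ·)) (partialDerivList p (α.sort (· ≤ ·)) f) b|
        ≤ Iop a b (α.sort (· ≤ ·)) (fun y => |partialDerivList p (α.sort (· ≤ ·)) f y|) b :=
      abs_Iop_le a b (α.sort (· ≤ ·)) habl _ hpdc b
    -- step d : value of the abs iterated integral via marginals
    have hd := ofReal_Iop a b ν (α.sort (· ≤ ·)) hlnd habl hν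
      (fun y => |partialDerivList p (α.sort (· ≤ ·)) f y|) hpdc.abs (fun y => abs_nonneg _) b
    rw [hltF] at hd
    -- replace integrand by F
    have hcongr : (∫⋯∫⁻_α, (fun y => ENNReal.ofReal
          |partialDerivList p (α.sort (· ≤ ·)) f y|) ∂ν) b = (∫⋯∫⁻_α, F ∂ν) b := by
      refine lintegral_congr fun y => ?_
      rw [hFdef]
      have hb1 : (fun j => if j ∈ α then Function.updateFinset b α y j else (1 : ℝ))
          = Function.updateFinset b α y := by
        funext j
        by_cases hj : j ∈ α
        · simp [hj]
        · simp [Function.updateFinset, hj, hbdef]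
      simp only
      rw [hb1]
    rw [hcongr] at hd
    -- step e/g/h : compute the marginal as a set integral
    have hprob : ∀ j ∈ αᶜ, IsProbabilityMeasure (ν j) := by
      intro j hj
      have hjα : j ∉ α := Finset.mem_compl.mp hj
      constructor
      rw [hνdef]
      simp only [if_neg hjα]
      rw [Measure.restrict_apply_univ, Real.volume_Ioc]
      norm_num
    have hind : ∀ (x : Fin p → ℝ) (y : (j : (αᶜ : Finset (Fin p))) → ℝ),
        F (Function.updateFinset x αᶜ y) = F x := by
      intro x y
      rw [hFdef]
      simp only
      have harg : (fun j => if j ∈ α then Function.updateFinset x αᶜ y j else (1 : ℝ))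
          = fun j => if j ∈ α then x j else 1 := by
        funext j
        by_cases hj : j ∈ α
        · have hj' : j ∉ (αᶜ : Finset (Fin p)) := by simpa using hj
          simp [hj, Function.updateFinset, hj']
        · simp [hj]
      rw [harg]
    have hmarg : (∫⋯∫⁻_α, F ∂ν) b = ∫⁻ y in S i, F y := by
      have h1 : (∫⋯∫⁻_α, F ∂ν) b = (∫⋯∫⁻_α, (∫⋯∫⁻_αᶜ, F ∂ν) ∂ν) b := by
        refine congrFun (congrArg _ ?_) b
        funext z
        exact (lmarginal_indep ν αᶜ hprob F hind z).symm
      have h2 : (∫⋯∫⁻_α ∪ αᶜ, F ∂ν) b = (∫⋯∫⁻_α, (∫⋯∫⁻_αᶜ, F ∂ν) ∂ν) b := by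
        rw [MeasureTheory.lmarginal_union ν F hFmeas disjoint_compl_right]
      rw [h1, ← h2, Finset.union_compl, MeasureTheory.lmarginal_univ]
      have hmeasS : ∀ j, MeasurableSet
          (if j ∈ α then Set.Ioc (t j (i j)) (t j (i j + 1)) else Set.Ioc (0 : ℝ) 1) := by
        intro j
        by_cases hj : j ∈ α <;> simp [hj, measurableSet_Ioc]
      have hpr := pi_restrict
        (fun j => if j ∈ α then Set.Ioc (t j (i j)) (t j (i j + 1)) else Set.Ioc (0 : ℝ) 1) hmeasS
      have hSi : S i = Set.univ.pi
          (fun j => if j ∈ α then Set.Ioc (t j (i j)) (t j (i j + 1)) else Set.Ioc (0 : ℝ) 1) := by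
        simp only [hSdef]
      have hνpi : Measure.pi ν = volume.restrict (S i) := by
        rw [hSi, hνdef]
        exact hpr
      rw [hνpi]
    -- combine
    have hnn : 0 ≤ Iop a b (α.sort (· ≤ ·))
        (fun y => |partialDerivList p (α.sort (· ≤ ·)) f y|) b :=
      Iop_nonneg a b (α.sort (· ≤ ·)) habl _ (fun y => abs_nonneg _) b
    calc |boxDiffOn p α f a b|
        = |Iop a b (α.sort (· ≤ ·)) (partialDerivList p (α.sort (· ≤ ·)) f) b| := by
          rw [ha, hb]
      _ ≤ Iop a b (α.sort (· ≤ ·)) (fun y => |partialDerivList p (α.sort (· ≤ ·)) f y|) b := hc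
      _ = (ENNReal.ofReal (Iop a b (α.sort (· ≤ ·))
            (fun y => |partialDerivList p (α.sort (· ≤ ·)) f y|) b)).toReal :=
          (ENNReal.toReal_ofReal hnn).symm
      _ = (∫⁻ y in S i, F y).toReal := by rw [hd, hmarg]
  -- sum up
  have hfin : ∀ i ∈ I, (∫⁻ y in S i, F y) ≠ ⊤ := fun i hi =>
    (lt_of_le_of_lt (lintegral_mono_set (hSsub i hi)) hcube_lt).ne
  refine le_trans (Finset.sum_le_sum claim1) ?_
  rw [← ENNReal.toReal_sum hfin]
  apply ENNReal.toReal_mono hcube_lt.ne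
  rw [← lintegral_biUnion_finset hdisj (fun i _ => hSmeas i) F]
  exact lintegral_mono_set (Set.iUnion₂_subset hSsub)


end HKAux

/-- For a p-times continuously differentiable f on [0,1]^p, the Hardy–Krause
variation is bounded by the sum over nonempty coordinate subsets α of the
integrals of the mixed partials |∂^{|α|}f/∂x_α| evaluated at (x_α, 1_{-α}). -/
theorem hkVar_le_sum_integral_partials (p : ℕ) (f : (Fin p → ℝ) → ℝ)
    (hf : ContDiff ℝ p f) :
    hkVar p f ≤
      ∑ α ∈ (Finset.univ : Finset (Fin p)).powerset.filter (fun α => α.Nonempty),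
        ∫ y in Set.univ.pi (fun _ : Fin p => Set.Icc (0 : ℝ) 1),
          |partialDerivList p (α.sort (· ≤ ·)) f (fun j => if j ∈ α then y j else 1)| := by
  unfold hkVar
  exact Finset.sum_le_sum fun α _ => HKAux.vitaliVar_le α f hf
end
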